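/- More generally, for μ > 0, the Laplace transform of f(x|μ) = (μ/(2√π)) x^{-3/2} e^{-μ²/(4x)} equals exp(-μ√s) for all s ≥ 0. -/

import Mathlib

open Real MeasureTheory Set


lemma gauss_half : ∫ t in Ioi (0:ℝ), Real.exp (-t^2) = Real.sqrt π / 2 := by
  have h1 : ∫ x : ℝ, Real.exp (-x^2) = Real.sqrt π := by
    simpa using integral_gaussian 1
  have h2 : ∫ x : ℝ, Real.exp (-|x|^2) = 2 * ∫ t in Ioi (0:ℝ), Real.exp (-t^2) :=
    integral_comp_abs (f := fun x => Real.exp (-x^2))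
  simp only [sq_abs] at h2
  linarith [h2 ▸ h1]

lemma glasser (c : ℝ) (hc : 0 ≤ c) :
    ∫ t in Ioi (0:ℝ), Real.exp (-t^2 - c^2/t^2) = Real.sqrt π / 2 * Real.exp (-(2*c)) := by
  rcases eq_or_lt_of_le hc with rfl | hc
  · rw [show ∫ t in Ioi (0:ℝ), Real.exp (-t^2 - (0:ℝ)^2/t^2)
        = ∫ t in Ioi (0:ℝ), Real.exp (-t^2) from
      setIntegral_congr_fun measurableSet_Ioi (fun t ht => by norm_num)]
    simp [gauss_half]
  -- c > 0 now
  set f₁ : ℝ → ℝ := fun t => Real.exp (-t^2 - c^2/t^2) with hf₁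
  -- integrability of f₁
  have base : Integrable (fun t : ℝ => Real.exp (-t^2)) := by
    simpa using integrable_exp_neg_mul_sq (one_pos)
  have hcont : ContinuousOn f₁ (Ioi 0) := by
    apply Real.continuous_exp.comp_continuousOn
    exact ((continuousOn_id.pow 2).neg.sub
      (continuousOn_const.div (continuousOn_id.pow 2) (fun t ht => by
        exact ne_of_gt (pow_pos (mem_Ioi.mp ht) 2))))
  have hint1 : IntegrableOn f₁ (Ioi 0) := by
    apply Integrable.mono' base.integrableOn
      (hcont.aestronglyMeasurable measurableSet_Ioi)
    filter_upwards [ae_restrict_mem measurableSet_Ioi] with t ht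
    rw [Real.norm_eq_abs, abs_of_pos (Real.exp_pos _)]
    apply Real.exp_le_exp.2
    have : 0 < t := ht
    nlinarith [sq_nonneg c, sq_nonneg t, div_nonneg (sq_nonneg c) (sq_nonneg t)]
  -- integrability of f₂
  have hxex : ∀ x : ℝ, 0 ≤ x → x * Real.exp (-x) ≤ 1 := by
    intro x hx
    rw [Real.exp_neg]
    rw [mul_inv_le_iff₀ (Real.exp_pos x), one_mul]
    linarith [Real.add_one_le_exp x]
  have hint2 : IntegrableOn (fun t => (c/t^2) * f₁ t) (Ioi 0) := by
    apply Integrable.mono' ((base.integrableOn).const_mul (1/c))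
    · exact ((continuousOn_const.div (continuousOn_id.pow 2) (fun t ht => by
        exact ne_of_gt (pow_pos (mem_Ioi.mp ht) 2))).mul hcont).aestronglyMeasurable measurableSet_Ioi
    · filter_upwards [ae_restrict_mem measurableSet_Ioi] with t ht
      have ht' : (0:ℝ) < t := ht
      rw [Real.norm_eq_abs, abs_of_nonneg (by positivity)]
      have key := hxex (c^2/t^2) (by positivity)
      have : f₁ t = Real.exp (-t^2) * Real.exp (-(c^2/t^2)) := by
        show Real.exp (-t^2 - c^2/t^2) = _
        rw [← Real.exp_add, sub_eq_add_neg]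
      rw [this]
      have h2 : (c/t^2) * Real.exp (-(c^2/t^2)) ≤ 1/c := by
        rw [le_div_iff₀ hc]
        calc c / t^2 * Real.exp (-(c^2/t^2)) * c = (c^2/t^2) * Real.exp (-(c^2/t^2)) := by ring
        _ ≤ 1 := key
      calc (c/t^2) * (Real.exp (-t^2) * Real.exp (-(c^2/t^2)))
          = ((c/t^2) * Real.exp (-(c^2/t^2))) * Real.exp (-t^2) := by ring
        _ ≤ (1/c) * Real.exp (-t^2) := by
            apply mul_le_mul_of_nonneg_right h2 (Real.exp_pos _).le
  -- Step A: symmetry substitution t ↦ c/t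
  have himg1 : (fun t : ℝ => c/t) '' Ioi 0 = Ioi 0 := by
    ext y; simp only [mem_image, mem_Ioi]
    constructor
    · rintro ⟨t, ht, rfl⟩; positivity
    · intro hy; exact ⟨c/y, by positivity, by field_simp⟩
  have hderiv1 : ∀ t ∈ Ioi (0:ℝ), HasDerivWithinAt (fun t : ℝ => c/t) (-(c/t^2)) (Ioi 0) t := by
    intro t ht
    have ht' : t ≠ 0 := ne_of_gt (mem_Ioi.mp ht)
    have h := (hasDerivAt_inv ht').const_mul c
    have h2 : HasDerivAt (fun x : ℝ => c/x) (-(c/t^2)) t := by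
      exact h.congr_deriv (by ring)
    exact h2.hasDerivWithinAt
  have hinj1 : InjOn (fun t : ℝ => c/t) (Ioi 0) := by
    intro t ht u hu h
    have ht' : (0:ℝ) < t := ht
    have hu' : (0:ℝ) < u := hu
    simp only at h
    field_simp at h
    exact h.symm
  have stepA : ∫ t in Ioi (0:ℝ), (c/t^2) * f₁ t = ∫ t in Ioi (0:ℝ), f₁ t := by
    have h := integral_image_eq_integral_abs_deriv_smul measurableSet_Ioi hderiv1 hinj1 f₁
    rw [himg1] at h
    rw [h]
    apply setIntegral_congr_fun measurableSet_Ioi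
    intro t ht
    have ht' : (0:ℝ) < t := ht
    show c / t^2 * f₁ t = |(-(c/t^2))| • f₁ (c/t)
    rw [smul_eq_mul, abs_neg, abs_of_pos (by positivity)]
    congr 1
    show Real.exp (-t^2 - c^2/t^2) = Real.exp (-(c/t)^2 - c^2/(c/t)^2)
    congr 1
    field_simp
    ring
  -- Step B: Glasser substitution t ↦ t - c/t
  set φ : ℝ → ℝ := fun t => t - c/t with hφ
  have himg2 : φ '' Ioi 0 = univ := by
    ext y; simp only [mem_image, mem_Ioi, mem_univ, iff_true]
    set r := Real.sqrt (y^2 + 4*c) with hr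
    have hr0 : 0 ≤ r := Real.sqrt_nonneg _
    have hr2 : r^2 = y^2 + 4*c := Real.sq_sqrt (by positivity)
    have hy : 0 < y + r := by
      by_contra hcon
      push_neg at hcon
      have h1 : r ≤ -y := by linarith
      have h2 := mul_self_le_mul_self hr0 h1
      nlinarith [hr2, hc]
    refine ⟨(y + r)/2, by linarith, ?_⟩
    have hne : (y + r)/2 ≠ 0 := by positivity
    show (y+r)/2 - c/((y+r)/2) = y
    field_simp
    nlinarith [hr2]
  have hderiv2 : ∀ t ∈ Ioi (0:ℝ), HasDerivWithinAt φ (1 + c/t^2) (Ioi 0) t := by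
    intro t ht
    have ht' : t ≠ 0 := ne_of_gt (mem_Ioi.mp ht)
    have h := (hasDerivAt_id t).sub ((hasDerivAt_inv ht').const_mul c)
    have h2 : HasDerivAt φ (1 + c/t^2) t := by
      exact h.congr_deriv (by ring)
    exact h2.hasDerivWithinAt
  have hinj2 : InjOn φ (Ioi 0) := by
    intro t ht u hu h
    have ht' : (0:ℝ) < t := ht
    have hu' : (0:ℝ) < u := hu
    have key : (t - u) * (t*u + c) = (φ t - φ u) * (t * u) := by
      simp only [hφ]; field_simp; ring
    rw [h, sub_self, zero_mul] at key
    rcases mul_eq_zero.mp key with h1 | h1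
    · linarith [sub_eq_zero.mp h1]
    · nlinarith
  have h1gauss : ∫ x : ℝ, Real.exp (-x^2) = Real.sqrt π := by
    simpa using integral_gaussian 1
  have keyB : ∫ t in Ioi (0:ℝ), |1 + c/t^2| • Real.exp (-(φ t)^2) = Real.sqrt π := by
    rw [← integral_image_eq_integral_abs_deriv_smul measurableSet_Ioi hderiv2 hinj2
      (fun x => Real.exp (-x^2)), himg2, Measure.restrict_univ]
    exact h1gauss
  have expand : ∀ t ∈ Ioi (0:ℝ), |1 + c/t^2| • Real.exp (-(φ t)^2)
      = Real.exp (2*c) * (f₁ t + (c/t^2) * f₁ t) := by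
    intro t ht
    have ht' : (0:ℝ) < t := ht
    rw [smul_eq_mul, abs_of_pos (by positivity)]
    have hsq : -(φ t)^2 = (-t^2 - c^2/t^2) + 2*c := by
      simp only [hφ]; field_simp; ring
    rw [hsq, Real.exp_add]
    show (1 + c/t^2) * (Real.exp (-t^2 - c^2/t^2) * Real.exp (2*c))
        = Real.exp (2*c) * (Real.exp (-t^2 - c^2/t^2) + (c/t^2) * Real.exp (-t^2 - c^2/t^2))
    ring
  have final : Real.sqrt π
      = Real.exp (2*c) * ((∫ t in Ioi (0:ℝ), f₁ t) + ∫ t in Ioi (0:ℝ), (c/t^2) * f₁ t) := by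
    rw [← keyB, setIntegral_congr_fun measurableSet_Ioi expand, integral_const_mul,
      integral_add hint1 hint2]
  rw [stepA] at final
  have hepos := Real.exp_pos (2*c)
  rw [show -(2*c) = -(2*c) from rfl, Real.exp_neg]
  field_simp
  linarith

theorem stable_half_laplace_transform_scaled (μ : ℝ) (hμ : 0 < μ) (s : ℝ) (hs : 0 ≤ s) :
    ∫ x in Ioi (0:ℝ),
      Real.exp (-s * x) * ((μ / (2 * Real.sqrt (π * x ^ (3:ℕ)))) * Real.exp (-μ^2 / (4 * x)))
      = Real.exp (-μ * Real.sqrt s) := by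
  have hsq : (0:ℝ) < Real.sqrt π := Real.sqrt_pos.2 pi_pos
  set c := μ * Real.sqrt s / 2 with hcdef
  have hc0 : 0 ≤ c := by positivity
  set f : ℝ → ℝ := fun t => μ^2/(4*t^2) with hfdef
  have himg : f '' Ioi 0 = Ioi 0 := by
    ext y; simp only [mem_image, mem_Ioi, hfdef]
    constructor
    · rintro ⟨t, ht, rfl⟩; positivity
    · intro hy
      have hsy : (0:ℝ) < Real.sqrt y := Real.sqrt_pos.2 hy
      have h2 : (Real.sqrt y)^2 = y := Real.sq_sqrt hy.le
      refine ⟨μ/(2*Real.sqrt y), by positivity, ?_⟩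
      field_simp
      nlinarith [h2]
  have hderiv : ∀ t ∈ Ioi (0:ℝ), HasDerivWithinAt f (-(μ^2/(2*t^3))) (Ioi 0) t := by
    intro t ht
    have ht' : (0:ℝ) < t := ht
    have ha : HasDerivAt (fun x : ℝ => 4*x^2) (8*t) t := by
      have := (hasDerivAt_pow 2 t).const_mul (4:ℝ)
      exact this.congr_deriv (by norm_num; ring)
    have hb := ha.inv (by positivity)
    have hcst := hb.const_mul (μ^2)
    have h2 : HasDerivAt f (-(μ^2/(2*t^3))) t := by
      exact hcst.congr_deriv (by field_simp; ring)
    exact h2.hasDerivWithinAt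
  have hinj : InjOn f (Ioi 0) := by
    have hanti : StrictAntiOn f (Ioi 0) := by
      intro t ht u hu htu
      simp only [hfdef]
      have htp : (0:ℝ) < t := ht
      exact div_lt_div_of_pos_left (by positivity) (by positivity) (by nlinarith)
    exact hanti.injOn
  have h := integral_image_eq_integral_abs_deriv_smul measurableSet_Ioi hderiv hinj
    (fun x => Real.exp (-s * x) * ((μ / (2 * Real.sqrt (π * x ^ (3:ℕ)))) * Real.exp (-μ^2 / (4 * x))))
  rw [himg] at h
  rw [h]
  have hcongr : ∀ t ∈ Ioi (0:ℝ), |(-(μ^2/(2*t^3)))| •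
      (Real.exp (-s * f t) * ((μ / (2 * Real.sqrt (π * (f t) ^ (3:ℕ)))) * Real.exp (-μ^2 / (4 * f t))))
      = (2/Real.sqrt π) * Real.exp (-t^2 - c^2/t^2) := by
    intro t ht
    have ht' : (0:ℝ) < t := ht
    rw [smul_eq_mul, abs_neg, abs_of_pos (by positivity)]
    have hA : Real.sqrt (π * (f t) ^ (3:ℕ)) = Real.sqrt π * (μ^3/(8*t^3)) := by
      rw [show π * (f t) ^ (3:ℕ) = (Real.sqrt π * (μ^3/(8*t^3)))^2 by
        rw [mul_pow, Real.sq_sqrt pi_pos.le, hfdef]; field_simp; ring]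
      exact Real.sqrt_sq (by positivity)
    have hB : -μ^2 / (4 * f t) = -t^2 := by
      simp only [hfdef]; field_simp
    have hc2 : c^2 = μ^2 * s / 4 := by
      rw [hcdef, div_pow, mul_pow, Real.sq_sqrt hs]; ring
    have hC : -s * f t = -(c^2/t^2) := by
      rw [hc2]; simp only [hfdef]; field_simp
    have hD : Real.exp (-t^2 - c^2/t^2) = Real.exp (-(c^2/t^2)) * Real.exp (-t^2) := by
      rw [← Real.exp_add]; congr 1; ring
    rw [hA, hB, hC, hD]
    field_simp
    ring
  rw [setIntegral_congr_fun measurableSet_Ioi hcongr, integral_const_mul, glasser c hc0]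
  rw [show -(2*c) = -μ * Real.sqrt s by rw [hcdef]; ring]
  field_simp
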